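/- Every graph admitting a Kempe coloring with k color classes is (k−1)-connected. -/

import Mathlib

/-- `𝔠` is a Kempe coloring of `G`: a partition of the vertex set into independent
sets such that the union of any two color classes induces a connected subgraph. -/
def KempeColoring {V : Type*} (G : SimpleGraph V) (𝔠 : Set (Set V)) : Prop :=
  (∀ C ∈ 𝔠, C.Nonempty) ∧
  (⋃₀ 𝔠 = Set.univ) ∧
  (∀ C ∈ 𝔠, ∀ D ∈ 𝔠, C ≠ D → Disjoint C D) ∧
  (∀ C ∈ 𝔠, ∀ a ∈ C, ∀ b ∈ C, ¬ G.Adj a b) ∧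
  (∀ C ∈ 𝔠, ∀ D ∈ 𝔠, C ≠ D → (G.induce (C ∪ D)).Connected)

/-- `G` is `n`-connected: it has more than `n` vertices and deleting any set of
fewer than `n` vertices leaves a connected graph. -/
def KConnected {V : Type*} [Fintype V] (G : SimpleGraph V) (n : ℕ) : Prop :=
  n < Fintype.card V ∧
  ∀ S : Finset V, S.card < n → (G.induce ((S : Set V)ᶜ)).Connected

private lemma exists_adj_of_reachable {W : Type*} {G : SimpleGraph W} {a b : W}
    (h : G.Reachable a b) (hab : a ≠ b) : ∃ c, G.Adj a c := by
  obtain ⟨p⟩ := h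
  cases p with
  | nil => exact absurd rfl hab
  | cons h' p' => exact ⟨_, h'⟩

/-- Every graph admitting a Kempe coloring with `k` color classes is
`(k-1)`-connected. -/
theorem kempe_implies_connectivity {V : Type*} [Fintype V] [Nonempty V]
    (G : SimpleGraph V) (𝔠 : Set (Set V)) (hK : KempeColoring G 𝔠)
    (k : ℕ) (hk : 𝔠.ncard = k) :
    KConnected G (k - 1) := by
  classical
  obtain ⟨hne, hcov, hdisj, hind, hconn⟩ := hK
  -- every vertex lies in some class
  have hgex : ∀ v : V, ∃ C ∈ 𝔠, v ∈ C := by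
    intro v
    have : v ∈ ⋃₀ 𝔠 := by rw [hcov]; trivial
    simpa using this
  choose g hg1 hg2 using hgex
  have guniq : ∀ v : V, ∀ C ∈ 𝔠, v ∈ C → g v = C := by
    intro v C hC hvC
    by_contra hne'
    exact Set.disjoint_left.mp (hdisj _ (hg1 v) C hC hne') (hg2 v) hvC
  -- k ≤ card V
  have hcard : k ≤ Fintype.card V := by
    set f : Set V → V := fun C => if h : C.Nonempty then h.some else Classical.arbitrary V
      with hf
    have hmem : ∀ C ∈ 𝔠, f C ∈ C := by
      intro C hC
      simp only [hf, dif_pos (hne C hC)]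
      exact (hne C hC).some_mem
    have hinj : Set.InjOn f 𝔠 := by
      intro C hC D hD hfd
      by_contra hne'
      exact Set.disjoint_left.mp (hdisj C hC D hD hne') (hmem C hC) (hfd ▸ hmem D hD)
    calc k = 𝔠.ncard := hk.symm
      _ = (f '' 𝔠).ncard := (Set.ncard_image_of_injOn hinj).symm
      _ ≤ (Set.univ : Set V).ncard := Set.ncard_le_ncard (Set.subset_univ _) Set.finite_univ
      _ = Fintype.card V := by simp [Set.ncard_univ, Nat.card_eq_fintype_card]
  have hpos : 0 < Fintype.card V := Fintype.card_pos
  refine ⟨by omega, ?_⟩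
  intro S hS
  have hk2 : 2 ≤ k := by omega
  have hfin : 𝔠.Finite := by
    by_contra h
    have : 𝔠.ncard = 0 := Set.Infinite.ncard h
    omega
  -- find two classes avoiding S
  have hsub : g '' ↑S ⊆ 𝔠 := by rintro _ ⟨v, _, rfl⟩; exact hg1 v
  have h1 : (g '' (↑S : Set V)).ncard ≤ S.card := by
    calc (g '' (↑S : Set V)).ncard ≤ (↑S : Set V).ncard := Set.ncard_image_le S.finite_toSet
      _ = S.card := Set.ncard_coe_finset S
  have hdiff := Set.ncard_diff hsub (S.finite_toSet.image g)
  have h2 : 1 < (𝔠 \ (g '' ↑S)).ncard := by omega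
  obtain ⟨C, D, hC, hD, hCD⟩ := (Set.one_lt_ncard_iff hfin.diff).mp h2
  have hC1 : C ∈ 𝔠 := hC.1
  have hD1 : D ∈ 𝔠 := hD.1
  have hCS : ∀ v ∈ C, v ∉ S := fun v hvC hvS => hC.2 ⟨v, hvS, guniq v C hC1 hvC⟩
  have hDS : ∀ v ∈ D, v ∉ S := fun v hvD hvS => hD.2 ⟨v, hvS, guniq v D hD1 hvD⟩
  set Sc : Set V := ((S : Set V))ᶜ with hSc
  have hCDsub : C ∪ D ⊆ Sc := by
    rintro x (hx | hx)
    · exact hCS x hx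
    · exact hDS x hx
  set H : SimpleGraph Sc := G.induce Sc with hH
  -- transfer reachability from induce (C ∪ D) to H
  have reachCD : ∀ (a b : V) (ha : a ∈ C ∪ D) (hb : b ∈ C ∪ D),
      H.Reachable ⟨a, hCDsub ha⟩ ⟨b, hCDsub hb⟩ := by
    intro a b ha hb
    exact ((hconn C hC1 D hD1 hCD).preconnected ⟨a, ha⟩ ⟨b, hb⟩).map
      (⟨fun x => ⟨x.1, hCDsub x.2⟩, fun {x y} h => h⟩ : G.induce (C ∪ D) →g H)
  -- pick a base vertex in C
  obtain ⟨c0, hc0C⟩ := hne C hC1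
  have hc0Sc : c0 ∈ Sc := hCDsub (Or.inl hc0C)
  have main : ∀ (v : V) (hv : v ∈ Sc), H.Reachable ⟨v, hv⟩ ⟨c0, hc0Sc⟩ := by
    intro v hv
    by_cases hvCD : v ∈ C ∪ D
    · exact reachCD v c0 hvCD (Or.inl hc0C)
    · have hvC : v ∉ C := fun h => hvCD (Or.inl h)
      have hEC : g v ≠ C := fun h => hvC (h ▸ hg2 v)
      have hcon := hconn (g v) (hg1 v) C hC1 hEC
      have hvne : (⟨v, Or.inl (hg2 v)⟩ : ↥(g v ∪ C)) ≠ ⟨c0, Or.inr hc0C⟩ := by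
        intro h
        exact hvC (by injection h with h'; exact h' ▸ hc0C)
      obtain ⟨u, hadj⟩ := exists_adj_of_reachable
        (hcon.preconnected ⟨v, Or.inl (hg2 v)⟩ ⟨c0, Or.inr hc0C⟩) hvne
      have hGadj : G.Adj v u.1 := hadj
      have huC : u.1 ∈ C := by
        rcases u.2 with h | h
        · exact absurd hGadj (hind (g v) (hg1 v) v (hg2 v) u.1 h)
        · exact h
      have huSc : u.1 ∈ Sc := hCDsub (Or.inl huC)
      have hHadj : H.Adj ⟨v, hv⟩ ⟨u.1, huSc⟩ := hGadj
      exact hHadj.reachable.trans (reachCD u.1 c0 (Or.inl huC) (Or.inl hc0C))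
  rw [SimpleGraph.connected_iff]
  exact ⟨fun a b => (main a.1 a.2).trans (main b.1 b.2).symm, ⟨⟨c0, hc0Sc⟩⟩⟩
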